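/- Let M be a matroid on ground set E, and let S ⊆ E be nonempty with r(M \ S) = r(M). Then the flags of M \ S are exactly the sequences (Y_0 - S, Y_1 - S, …, Y_k - S) where (Y_0, …, Y_k) ranges over the flags of M that do not collapse in M \ S. -/

import Mathlib

open Set Matroid

namespace ConePaper

variable {α : Type*}

/-- The rank of a set in a matroid: the supremum of sizes of independent subsets. -/
noncomputable def rk (M : Matroid α) (X : Set α) : ℕ :=
  sSup {n : ℕ | ∃ I, M.Indep I ∧ I ⊆ X ∧ I.ncard = n}

/-- A loopless matroid: every singleton of the ground set is independent. -/
def Loopless (M : Matroid α) : Prop := ∀ e ∈ M.E, M.Indep {e}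

/-- A coloop: an element of the ground set lying in every base. -/
def IsColoop (M : Matroid α) (e : α) : Prop := e ∈ M.E ∧ ∀ B, M.IsBase B → e ∈ B

/-- A circuit: a minimal dependent set. -/
def IsCircuit (M : Matroid α) (C : Set α) : Prop :=
  C ⊆ M.E ∧ ¬ M.Indep C ∧ ∀ x ∈ C, M.Indep (C \ {x})

/-- A cyclic flat: a flat whose restriction has no coloops. -/
def CyclicFlat (M : Matroid α) (F : Set α) : Prop :=
  M.IsFlat F ∧ ∀ e ∈ F, ¬ IsColoop (M ↾ F) e

/-- Deletion of a set from a matroid. -/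
def mdel (M : Matroid α) (X : Set α) : Matroid α := M ↾ (M.E \ X)

/-- The cone `q(S) = S ∪ {a} ∪ ⋃_{e ∈ S} T e`. -/
def cone (T : α → Set α) (a : α) (S : Set α) : Set α := S ∪ {a} ∪ ⋃ e ∈ S, T e

/-- The projection `p(S) = (S ∩ E) ∪ {e ∈ E : S ∩ T e ≠ ∅}`. -/
def proj (E : Set α) (T : α → Set α) (S : Set α) : Set α :=
  (S ∩ E) ∪ {e ∈ E | (S ∩ T e).Nonempty}

/-- `FreeCone M Q T a m` says that `Q` is the free `m`-cone of the loopless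
matroid `M`, with extra points `T e` (of size `m`) for `e ∈ M.E` and tip `a`:
its cyclic flats are those of `M` (with the same rank) together with the cones
of nonempty flats of `M` (with rank one greater). -/
structure FreeCone (M Q : Matroid α) (T : α → Set α) (a : α) (m : ℕ) : Prop where
  hm : 1 ≤ m
  hMfin : M.E.Finite
  hloopless : Loopless M
  hTfin : ∀ e ∈ M.E, (T e).Finite
  hTcard : ∀ e ∈ M.E, (T e).ncard = m
  hTdisjE : ∀ e ∈ M.E, Disjoint (T e) M.E
  hTdisj : ∀ e ∈ M.E, ∀ f ∈ M.E, e ≠ f → Disjoint (T e) (T f)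
  ha : a ∉ M.E ∪ ⋃ e ∈ M.E, T e
  hQE : Q.E = M.E ∪ (⋃ e ∈ M.E, T e) ∪ {a}
  hcyclic : ∀ F, CyclicFlat Q F ↔
      (CyclicFlat M F ∨ ∃ F', M.IsFlat F' ∧ F'.Nonempty ∧ F = cone T a F')
  hrank1 : ∀ F, CyclicFlat M F → rk Q F = rk M F
  hrank2 : ∀ F', M.IsFlat F' → F'.Nonempty → rk Q (cone T a F') = rk M F' + 1

/-- A flag of a rank-`k` matroid: a chain of flats, one of each rank `0,…,k`. -/
def IsFlag (N : Matroid α) (k : ℕ) (X : ℕ → Set α) : Prop :=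
  (∀ i ≤ k, N.IsFlat (X i) ∧ rk N (X i) = i) ∧ ∀ i < k, X i ⊂ X (i + 1)

variable {M : Matroid α} {X Y F F' I R : Set α} {e : α}

lemma rkSet_nonempty (M : Matroid α) (X : Set α) :
    {n : ℕ | ∃ I, M.Indep I ∧ I ⊆ X ∧ I.ncard = n}.Nonempty :=
  ⟨0, ∅, M.empty_indep, empty_subset _, by simp⟩

lemma rkSet_bdd (hfin : M.E.Finite) (X : Set α) :
    BddAbove {n : ℕ | ∃ I, M.Indep I ∧ I ⊆ X ∧ I.ncard = n} := by
  refine ⟨M.E.ncard, ?_⟩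
  rintro n ⟨I, hI, -, rfl⟩
  exact ncard_le_ncard hI.subset_ground hfin

lemma le_rk (hfin : M.E.Finite) (hI : M.Indep I) (hIX : I ⊆ X) : I.ncard ≤ rk M X :=
  le_csSup (rkSet_bdd hfin X) ⟨I, hI, hIX, rfl⟩

lemma rk_basis' (hfin : M.E.Finite) (hI : M.IsBasis' I X) : rk M X = I.ncard := by
  refine le_antisymm (csSup_le (rkSet_nonempty M X) ?_) (le_rk hfin hI.indep hI.subset)
  rintro n ⟨J, hJ, hJX, rfl⟩
  by_contra h
  push_neg at h
  have hIfin : I.Finite := hfin.subset hI.indep.subset_ground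
  have hJfin : J.Finite := hfin.subset hJ.subset_ground
  have hlt : I.encard < J.encard := by
    rw [← hIfin.cast_ncard_eq, ← hJfin.cast_ncard_eq]
    exact_mod_cast h
  obtain ⟨e, heJI, hins⟩ := hI.indep.augment hJ hlt
  have hsub : insert e I ⊆ X := insert_subset (hJX heJI.1) hI.subset
  have := hI.2 ⟨hins, hsub⟩ (subset_insert _ _) (mem_insert _ _)
  exact heJI.2 this

lemma rk_mono (hfin : M.E.Finite) (h : X ⊆ Y) : rk M X ≤ rk M Y := by
  refine csSup_le (rkSet_nonempty M X) ?_
  rintro n ⟨I, hI, hIX, rfl⟩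
  exact le_rk hfin hI (hIX.trans h)

lemma rk_closure (hfin : M.E.Finite) (X : Set α) : rk M (M.closure X) = rk M X := by
  obtain ⟨I, hI⟩ := M.exists_isBasis' X
  rw [rk_basis' hfin hI, rk_basis' hfin hI.isBasis_closure_right.isBasis']

lemma closure_flat' (M : Matroid α) (X : Set α) : M.IsFlat (M.closure X) := by
  rw [closure_def, sInter_eq_iInter]
  haveI : Nonempty ↑{F | M.IsFlat F ∧ X ∩ M.E ⊆ F} := ⟨⟨M.E, M.ground_isFlat, inter_subset_right⟩⟩
  exact IsFlat.iInter fun F ↦ F.2.1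

lemma flat_of_closure_eq (h : M.closure F = F) : M.IsFlat F := h ▸ closure_flat' M F

lemma rk_lt_of_flat_ssubset (hfin : M.E.Finite) (hF : M.IsFlat F) (hF' : M.IsFlat F')
    (hss : F ⊂ F') : rk M F < rk M F' := by
  obtain ⟨I, hI⟩ := M.exists_isBasis F hF.subset_ground
  obtain ⟨e, heF', heF⟩ := exists_of_ssubset hss
  have heI : e ∉ I := fun h ↦ heF (hI.subset h)
  have hecl : e ∉ M.closure I := by
    rw [hI.closure_eq_closure, hF.closure]; exact heF
  have hins : M.Indep (insert e I) := by
    rw [hI.indep.insert_indep_iff_of_notMem heI]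
    exact ⟨hF'.subset_ground heF', hecl⟩
  have h1 : rk M F = I.ncard := rk_basis' hfin hI.isBasis'
  have hIfin : I.Finite := hfin.subset hI.indep.subset_ground
  have h2 : (insert e I).ncard = I.ncard + 1 := ncard_insert_of_notMem heI hIfin
  have h3 := le_rk hfin hins (insert_subset heF' (hI.subset.trans hss.subset))
  omega

lemma restrict_closure' (hR : R ⊆ M.E) (X : Set α) :
    (M ↾ R).closure X = M.closure (X ∩ R) ∩ R := by
  obtain ⟨I, hI⟩ := (M ↾ R).exists_isBasis' X
  have hIM : M.IsBasis' I (X ∩ R) := (isBasis'_restrict_iff.mp hI).1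
  have hIR : I ⊆ R := (isBasis'_restrict_iff.mp hI).2
  rw [← hI.closure_eq_closure, ← hIM.closure_eq_closure]
  ext e
  rw [mem_inter_iff, hI.indep.mem_closure_iff', hIM.indep.mem_closure_iff',
    restrict_indep_iff, restrict_ground_eq]
  constructor
  · rintro ⟨heR, h2⟩
    exact ⟨⟨hR heR, fun hind ↦ h2 ⟨hind, insert_subset heR hIR⟩⟩, heR⟩
  · rintro ⟨⟨heE, h2⟩, heR⟩
    exact ⟨heR, fun h ↦ h2 h.1⟩

lemma inter_diff_of_subset' {A B S : Set α} (h : A ⊆ B) : A ∩ (B \ S) = A \ S := by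
  ext x
  simp only [mem_inter_iff, mem_diff]
  exact ⟨fun ⟨h1, _, h3⟩ ↦ ⟨h1, h3⟩, fun ⟨h1, h2⟩ ↦ ⟨h1, h h1, h2⟩⟩

lemma flagRank (k : ℕ) (f : ℕ → ℕ) (hmono : ∀ i < k, f i < f (i + 1)) (hk : f k ≤ k) :
    ∀ i ≤ k, f i = i := by
  have key : ∀ d i, i + d ≤ k → f i + d ≤ f (i + d) := by
    intro d
    induction d with
    | zero => simp
    | succ n ih =>
      intro i h
      have h1 := ih i (by omega)
      have h2 := hmono (i + n) (by omega)
      rw [show i + (n + 1) = (i + n) + 1 from rfl]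
      omega
  intro i hi
  have h1 := key i 0 (by omega)
  rw [Nat.zero_add] at h1
  have h2 := key (k - i) i (by omega)
  rw [Nat.add_sub_cancel' hi] at h2
  omega


/-- When `r(M \ S) = r(M)`, the flags of `M \ S` are exactly the images `(Y i \ S)`
of the flags `(Y i)` of `M` that do not collapse. -/

theorem flags_of_deletion (M : Matroid α) (hfin : M.E.Finite)
    (S : Set α) (hSE : S ⊆ M.E) (hne : S.Nonempty) (k : ℕ) (hk : rk M M.E = k)
    (hr : rk (mdel M S) (M.E \ S) = k) :
    ∀ Z : ℕ → Set α,
      IsFlag (mdel M S) k Z ↔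
        ∃ Y : ℕ → Set α, IsFlag M k Y ∧ (∀ i < k, Y i \ S ≠ Y (i + 1) \ S) ∧
          ∀ i ≤ k, Z i = Y i \ S := by
  have hNE : (mdel M S).E = M.E \ S := rfl
  have hNfin : (mdel M S).E.Finite := hNE ▸ hfin.subset diff_subset
  have hRE : M.E \ S ⊆ M.E := diff_subset
  have rk_del : ∀ X : Set α, X ⊆ M.E \ S → rk (mdel M S) X = rk M X := by
    intro X hX
    unfold rk
    congr 1
    ext n
    constructor <;> rintro ⟨I, hI, hIX, rfl⟩
    · exact ⟨I, hI.of_restrict, hIX, rfl⟩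
    · exact ⟨I, hI.indep_restrict_of_subset (hIX.trans hX), hIX, rfl⟩
  have hNcl : ∀ X : Set α, X ⊆ M.E \ S →
      (mdel M S).closure X = M.closure X ∩ (M.E \ S) := by
    intro X hX
    rw [show mdel M S = M ↾ (M.E \ S) from rfl, restrict_closure' hRE,
      inter_eq_left.mpr hX]
  have hflatdel : ∀ F, M.IsFlat F → (mdel M S).IsFlat (F \ S) := by
    intro F hF
    apply flat_of_closure_eq
    rw [hNcl (F \ S) (diff_subset_diff_left hF.subset_ground)]
    apply subset_antisymm
    · have h1 : M.closure (F \ S) ⊆ F := by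
        nth_rw 2 [← hF.closure]
        exact M.closure_subset_closure diff_subset
      exact (inter_subset_inter_left _ h1).trans
        (inter_diff_of_subset' hF.subset_ground).subset
    · exact subset_inter (M.subset_closure _ (diff_subset.trans hF.subset_ground))
        (diff_subset_diff_left hF.subset_ground)
  intro Z
  constructor
  · rintro ⟨hZflat, hZchain⟩
    have hZE : ∀ i ≤ k, Z i ⊆ M.E \ S := fun i hi ↦ hNE ▸ (hZflat i hi).1.subset_ground
    have hZeq : ∀ i ≤ k, Z i = M.closure (Z i) \ S := by
      intro i hi
      have h1 := hNcl (Z i) (hZE i hi)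
      rw [(hZflat i hi).1.closure] at h1
      rw [← inter_diff_of_subset' (M.closure_subset_ground (Z i))]
      exact h1
    have hrkcl : ∀ i ≤ k, rk M (M.closure (Z i)) = i := by
      intro i hi
      rw [rk_closure hfin, ← rk_del _ (hZE i hi)]
      exact (hZflat i hi).2
    refine ⟨fun i ↦ M.closure (Z i), ⟨fun i hi ↦ ⟨closure_flat' M _, hrkcl i hi⟩,
      fun i hlt ↦ ?_⟩, fun i hlt ↦ ?_, fun i hi ↦ hZeq i hi⟩
    · refine (M.closure_subset_closure (hZchain i hlt).subset).ssubset_of_ne fun he ↦ ?_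
      have r1 := hrkcl i hlt.le
      have r2 := hrkcl (i + 1) hlt
      rw [he, r2] at r1
      omega
    · rw [← hZeq i hlt.le, ← hZeq (i + 1) hlt]
      exact (hZchain i hlt).ne
  · rintro ⟨Y, ⟨hYflat, hYchain⟩, hnc, hZY⟩
    have hNflat : ∀ i ≤ k, (mdel M S).IsFlat (Z i) := fun i hi ↦
      (hZY i hi) ▸ hflatdel _ (hYflat i hi).1
    have hchain : ∀ i < k, Z i ⊂ Z (i + 1) := by
      intro i hlt
      rw [hZY i hlt.le, hZY (i + 1) hlt]
      exact (diff_subset_diff_left (hYchain i hlt).subset).ssubset_of_ne (hnc i hlt)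
    have hmono : ∀ i < k, rk (mdel M S) (Z i) < rk (mdel M S) (Z (i + 1)) := fun i hlt ↦
      rk_lt_of_flat_ssubset hNfin (hNflat i hlt.le) (hNflat (i + 1) hlt) (hchain i hlt)
    have hk0 : rk (mdel M S) (Z k) ≤ rk (mdel M S) (M.E \ S) :=
      rk_mono hNfin ((hNflat k le_rfl).subset_ground)
    have hk' : rk (mdel M S) (Z k) ≤ k := by rw [hr] at hk0; exact hk0
    have hfr := flagRank k (fun i ↦ rk (mdel M S) (Z i)) hmono hk'
    exact ⟨fun i hi ↦ ⟨hNflat i hi, hfr i hi⟩, hchain⟩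

end ConePaper
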